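/- Combining the previous two lemmas with the Hoskin–Deligne formula: the colength of the divisorial ideal J^D(w) with w = n̂·M is h^D(w) = (1/2)( Σ_{i,i'} m_{ii'} n̂_i n̂_{i'} + Σ_i n̂_i ( Σ_{i'} m_{ii'}(2h_{i'} - ν•_{i'}) - 1 ) ). -/

import Mathlib

open Matrix Finset

/-- Combining the formulas for `deg_X(A·A)` and `deg_X(A·K)` with the
Hoskin–Deligne formula: the colength of the divisorial ideal `J^D(w)`, with
`w = nh·M`, `N = -P·Δ·Pᵗ` the intersection matrix, `M = (m_{ii'}) = -N⁻¹`,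
`ν•_i = ∑_{j≠i} n_{ij}`, `α = w·P`, `deg_X(A·A) = w·N·wᵗ`,
`deg_X(A·K) = -α·Δ·1ᵗ` and `h^D = -(deg_X(A·A) + deg_X(A·K))/2`, equals
`h^D(w) = (1/2)( ∑_{i,i'} m_{ii'} nh_i nh_{i'}
  + ∑_i nh_i ( ∑_{i'} m_{ii'}(2h_{i'} - ν•_{i'}) - 1 ) )`. -/
theorem colength_divisorial_ideal (s : ℕ)
    (P : Matrix (Fin s) (Fin s) ℚ) (h : Fin s → ℚ)
    (hdiag : ∀ i, P i i = 1)
    (hlower : ∀ i j : Fin s, j < i → P i j = 0)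
    (hupper : ∀ i j : Fin s, i < j → P i j = 0 ∨ P i j = -1)
    (hh : ∀ i, 1 ≤ h i)
    (nh : Fin s → ℚ) (hnh : ∀ i, 0 ≤ nh i)
    (N M : Matrix (Fin s) (Fin s) ℚ)
    (hN : N = -(P * Matrix.diagonal h * P.transpose))
    (hM : M = -N⁻¹)
    (ν : Fin s → ℚ)
    (hν : ∀ i, ν i = ∑ j ∈ Finset.univ.erase i, N i j)
    (w α : Fin s → ℚ)
    (hw : w = Matrix.vecMul nh M)
    (hα : α = Matrix.vecMul w P)
    (hD : ℚ)
    (hHD : hD = -((dotProduct (Matrix.vecMul w N) w) +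
      (-(dotProduct (Matrix.vecMul α (Matrix.diagonal h)) (fun _ => 1)))) / 2) :
    hD = (1 / 2) * ((∑ i, ∑ i', M i i' * nh i * nh i') +
      ∑ i, nh i * ((∑ i', M i i' * (2 * h i' - ν i')) - 1)) := by
  have detP : P.det = 1 := by
    rw [Matrix.det_of_upperTriangular (fun i j hij => hlower i j hij)]
    simp [hdiag]
  have hprod : (∏ i, h i) ≠ 0 :=
    Finset.prod_ne_zero_iff.mpr fun i _ => ne_of_gt (lt_of_lt_of_le one_pos (hh i))
  have hUnit : IsUnit N.det := by
    rw [hN, Matrix.det_neg, Matrix.det_mul, Matrix.det_mul, Matrix.det_transpose, detP,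
      Matrix.det_diagonal]
    apply isUnit_iff_ne_zero.mpr
    simp [hprod]
  have hMN : M * N = -1 := by
    rw [hM, neg_mul, Matrix.nonsing_inv_mul N hUnit]
  have hNsym : N.transpose = N := by
    rw [hN]
    simp [Matrix.transpose_mul, Matrix.mul_assoc]
  have hMsym : ∀ i j, M i j = M j i := by
    intro i j
    have : M.transpose = M := by
      rw [hM, Matrix.transpose_neg, Matrix.transpose_nonsing_inv, hNsym]
    calc M i j = M.transpose j i := rfl
      _ = M j i := by rw [this]
  -- Term 1
  have hT1 : dotProduct (Matrix.vecMul w N) w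
      = -(∑ i, ∑ i', M i i' * nh i * nh i') := by
    rw [hw, Matrix.vecMul_vecMul, hMN]
    have : Matrix.vecMul nh (-1 : Matrix (Fin s) (Fin s) ℚ) = -nh := by
      rw [Matrix.vecMul_neg, Matrix.vecMul_one]
    rw [this, neg_dotProduct, neg_inj]
    simp only [dotProduct, Matrix.vecMul, dotProduct]
    rw [Finset.sum_comm]
    refine Finset.sum_congr rfl fun i _ => ?_
    rw [Finset.mul_sum]
    refine Finset.sum_congr rfl fun j _ => ?_
    ring
  -- auxiliary scalar facts
  have hPsq : ∀ i k : Fin s, i ≠ k → P i k + P i k * P i k = 0 := by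
    intro i k hik
    rcases lt_or_gt_of_ne hik with hlt | hgt
    · rcases hupper i k hlt with h0 | h1
      · rw [h0]; ring
      · rw [h1]; ring
    · rw [hlower i k hgt]; ring
  have hNii : ∀ i, N i i = -∑ k, P i k * P i k * h k := by
    intro i
    rw [hN]
    simp [Matrix.mul_apply, Matrix.diagonal, Matrix.transpose_apply, Finset.mul_sum]
    congr 1
    funext k
    ring
  set c : Fin s → ℚ := fun i => ∑ k, P i k * h k with hc
  have hkey : ∀ i, c i = (2 * h i - ν i) + ∑ j, N i j := by
    intro i
    have h2 : ∑ k, (P i k + P i k * P i k) * h k = 2 * h i := by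
      rw [Finset.sum_eq_single i]
      · rw [hdiag]; ring
      · intro k _ hk; rw [hPsq i k (Ne.symm hk)]; ring
      · simp
    have h3 : ∑ j, N i j = N i i + ν i := by
      rw [hν i, Finset.add_sum_erase _ _ (Finset.mem_univ i)]
    have h4 : c i = 2 * h i + N i i := by
      rw [hNii i, hc]
      have := h2
      rw [Finset.sum_congr rfl (fun k _ => by ring :
        ∀ k ∈ Finset.univ, (P i k + P i k * P i k) * h k
          = P i k * h k + P i k * P i k * h k), Finset.sum_add_distrib] at this
      linarith
    rw [h4, h3]; ring
  -- Term 2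
  have hT2 : dotProduct (Matrix.vecMul α (Matrix.diagonal h)) (fun _ => 1)
      = ∑ i, nh i * ((∑ i', M i i' * (2 * h i' - ν i')) - 1) := by
    have hdiagdot : dotProduct (Matrix.vecMul α (Matrix.diagonal h)) (fun _ => 1)
        = dotProduct α h := by
      simp [dotProduct, Matrix.vecMul_diagonal]
    rw [hdiagdot, hα, ← Matrix.dotProduct_mulVec]
    have hPh : P.mulVec h = c := by
      funext i
      simp [Matrix.mulVec, dotProduct, hc]
    rw [hPh, hw, ← Matrix.dotProduct_mulVec]
    have hMc : M.mulVec c = fun i => (∑ i', M i i' * (2 * h i' - ν i')) - 1 := by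
      funext i
      have : c = (fun j => 2 * h j - ν j) + N.mulVec (fun _ => 1) := by
        funext j
        simp [Matrix.mulVec, dotProduct, hkey j]
      rw [this, Matrix.mulVec_add, Matrix.mulVec_mulVec, hMN]
      simp [Matrix.mulVec, dotProduct, Matrix.one_apply, sub_eq_add_neg]
    rw [hMc]
    simp [dotProduct]
  rw [hHD, hT1, hT2]
  ring
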